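/- Let H be a Hopf algebra over a field k, δ : H → k an algebra character, and σ ∈ H a group-like element with δ(σ) = 1. If the twisted antipode S_δ(h) := δ(h₍₁₎)S(h₍₂₎) satisfies S_δ² = Ad_σ (i.e. S_δ(S_δ(h)) = σ h σ⁻¹ for all h), then the one-dimensional space k, with right H-action v·h := δ(h)v and left H-coaction v ↦ σ ⊗ v, is a stable anti-Yetter-Drinfeld module over H; that is, the AYD condition ∇(v·h) = S(h₍₃₎)σh₍₁₎ ⊗ δ(h₍₂₎)v holds together with stability. -/

import Mathlib

open TensorProduct

open Coalgebra HopfAlgebra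

namespace MPIAux

variable {k : Type*} [Field k] {H : Type*} [Ring H] [HopfAlgebra k H]

noncomputable def triMul (p q r : H →ₗ[k] H) : H ⊗[k] (H ⊗[k] H) →ₗ[k] H :=
  LinearMap.mul' k H ∘ₗ TensorProduct.map p (LinearMap.mul' k H ∘ₗ TensorProduct.map q r)

@[simp] lemma triMul_tmul (p q r : H →ₗ[k] H) (u v w : H) :
    triMul p q r (u ⊗ₜ[k] (v ⊗ₜ[k] w)) = p u * (q v * r w) := rfl

lemma repr_smul_left {a : H} {ι : Type*} (r : Repr k a ι) :
    ∑ i ∈ r.index, counit (R := k) (r.right i) • r.left i = a := by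
  have h : (TensorProduct.rid k H) (∑ i ∈ r.index, r.left i ⊗ₜ counit (R := k) (r.right i))
      = (TensorProduct.rid k H) (a ⊗ₜ (1 : k)) := by rw [sum_tmul_counit_eq]
  simp only [map_sum, TensorProduct.rid_tmul, one_smul] at h
  exact h

lemma repr_smul_right {a : H} {ι : Type*} (r : Repr k a ι) :
    ∑ i ∈ r.index, counit (R := k) (r.left i) • r.right i = a := by
  have h : (TensorProduct.lid k H) (∑ i ∈ r.index, counit (R := k) (r.left i) ⊗ₜ r.right i)
      = (TensorProduct.lid k H) ((1 : k) ⊗ₜ a) := by rw [sum_counit_tmul_eq]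
  simp only [map_sum, TensorProduct.lid_tmul, one_smul] at h
  exact h

lemma antipode_one' : antipode (R := k) (1 : H) = 1 := by
  have := mul_antipode_rTensor_comul_apply (R := k) (a := (1 : H))
  simpa [Bialgebra.comul_one, Algebra.TensorProduct.one_def] using this

theorem antipode_mul_rev (a b : H) :
    antipode (R := k) (a * b) = antipode (R := k) b * antipode (R := k) a := by
  classical
  set S : H →ₗ[k] H := antipode (R := k) with hS
  let ra := ℛ k a
  let rb := ℛ k b
  let ra1 : ∀ i, Repr k (ra.left i) (H × H) := fun i => ℛ k (ra.left i)
  let ra2 : ∀ i, Repr k (ra.right i) (H × H) := fun i => ℛ k (ra.right i)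
  let rb1 : ∀ i, Repr k (rb.left i) (H × H) := fun i => ℛ k (rb.left i)
  let rb2 : ∀ i, Repr k (rb.right i) (H × H) := fun i => ℛ k (rb.right i)
  set X : H := ∑ i ∈ ra.index, ∑ j ∈ (ra1 i).index, ∑ m ∈ rb.index, ∑ l ∈ (rb1 m).index,
      S ((ra1 i).left j * (rb1 m).left l) *
        ((ra1 i).right j * (rb1 m).right l * (S (rb.right m) * S (ra.right i))) with hX
  have claim1 : X = S b * S a := by
    rw [hX]
    have step1 : ∀ i ∈ ra.index, ∀ m ∈ rb.index,
        (∑ j ∈ (ra1 i).index, ∑ l ∈ (rb1 m).index,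
          S ((ra1 i).left j * (rb1 m).left l) *
            ((ra1 i).right j * (rb1 m).right l * (S (rb.right m) * S (ra.right i))))
        = (counit (R := k) (ra.left i) * counit (R := k) (rb.left m)) •
            (S (rb.right m) * S (ra.right i)) := by
      intro i _ m _
      set D := S (rb.right m) * S (ra.right i) with hD
      have e1 : (∑ j ∈ (ra1 i).index, ∑ l ∈ (rb1 m).index,
          S ((ra1 i).left j * (rb1 m).left l) *
            ((ra1 i).right j * (rb1 m).right l * D))
          = (∑ j ∈ (ra1 i).index, ∑ l ∈ (rb1 m).index,
            S ((ra1 i).left j * (rb1 m).left l) *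
              ((ra1 i).right j * (rb1 m).right l)) * D := by
        rw [Finset.sum_mul]
        refine Finset.sum_congr rfl fun j _ => ?_
        rw [Finset.sum_mul]
        exact Finset.sum_congr rfl fun l _ => by simp only [mul_assoc]
      rw [e1]
      have ht : comul (R := k) (ra.left i * rb.left m)
          = ∑ j ∈ (ra1 i).index, ∑ l ∈ (rb1 m).index,
              ((ra1 i).left j * (rb1 m).left l) ⊗ₜ[k] ((ra1 i).right j * (rb1 m).right l) := by
        rw [Bialgebra.comul_mul, ← (ra1 i).eq, ← (rb1 m).eq, Finset.sum_mul_sum]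
        simp [Algebra.TensorProduct.tmul_mul_tmul]
      have e2 : (∑ j ∈ (ra1 i).index, ∑ l ∈ (rb1 m).index,
            S ((ra1 i).left j * (rb1 m).left l) *
              ((ra1 i).right j * (rb1 m).right l))
          = LinearMap.mul' k H ((S.rTensor H) (comul (R := k) (ra.left i * rb.left m))) := by
        rw [ht]
        simp [map_sum]
      rw [e2, hS, mul_antipode_rTensor_comul_apply, Bialgebra.counit_mul, Algebra.smul_def]
    have hb' : ∑ m ∈ rb.index, counit (R := k) (rb.left m) • S (rb.right m) = S b := by
      have h := congrArg S (repr_smul_right rb)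
      simpa only [map_sum, map_smul] using h
    have ha' : ∑ i ∈ ra.index, counit (R := k) (ra.left i) • S (ra.right i) = S a := by
      have h := congrArg S (repr_smul_right ra)
      simpa only [map_sum, map_smul] using h
    calc (∑ i ∈ ra.index, ∑ j ∈ (ra1 i).index, ∑ m ∈ rb.index, ∑ l ∈ (rb1 m).index,
          S ((ra1 i).left j * (rb1 m).left l) *
            ((ra1 i).right j * (rb1 m).right l * (S (rb.right m) * S (ra.right i))))
        = ∑ i ∈ ra.index, ∑ m ∈ rb.index, ∑ j ∈ (ra1 i).index, ∑ l ∈ (rb1 m).index,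
          S ((ra1 i).left j * (rb1 m).left l) *
            ((ra1 i).right j * (rb1 m).right l * (S (rb.right m) * S (ra.right i))) :=
          Finset.sum_congr rfl fun i _ => Finset.sum_comm
      _ = ∑ i ∈ ra.index, ∑ m ∈ rb.index,
            (counit (R := k) (ra.left i) * counit (R := k) (rb.left m)) •
              (S (rb.right m) * S (ra.right i)) :=
          Finset.sum_congr rfl fun i hi => Finset.sum_congr rfl fun m hm => step1 i hi m hm
      _ = ∑ i ∈ ra.index, counit (R := k) (ra.left i) •
            ((∑ m ∈ rb.index, counit (R := k) (rb.left m) • S (rb.right m)) * S (ra.right i)) := by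
          refine Finset.sum_congr rfl fun i _ => ?_
          rw [Finset.sum_mul, Finset.smul_sum]
          exact Finset.sum_congr rfl fun m _ => by rw [smul_mul_assoc, mul_smul]
      _ = ∑ i ∈ ra.index, counit (R := k) (ra.left i) • (S b * S (ra.right i)) := by
          rw [hb']
      _ = S b * ∑ i ∈ ra.index, counit (R := k) (ra.left i) • S (ra.right i) := by
          rw [Finset.mul_sum]
          exact Finset.sum_congr rfl fun i _ => (mul_smul_comm _ _ _).symm
      _ = S b * S a := by rw [ha']
  have claim2 : X = S (a * b) := by
    rw [hX]
    have h2a : ∀ i ∈ ra.index, ∀ j ∈ (ra1 i).index,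
        (∑ m ∈ rb.index, ∑ l ∈ (rb1 m).index,
          S ((ra1 i).left j * (rb1 m).left l) *
            ((ra1 i).right j * (rb1 m).right l * (S (rb.right m) * S (ra.right i))))
        = S ((ra1 i).left j * b) * ((ra1 i).right j * S (ra.right i)) := by
      intro i _ j _
      have key := sum_tmul_tmul_eq (R := k) rb rb1 rb2
      have key2 := congrArg (triMul (S ∘ₗ LinearMap.mulLeft k ((ra1 i).left j))
        (LinearMap.mulLeft k ((ra1 i).right j))
        (LinearMap.mulRight k (S (ra.right i)) ∘ₗ S)) key
      simp only [map_sum, triMul_tmul, LinearMap.comp_apply, LinearMap.mulLeft_apply,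
        LinearMap.mulRight_apply] at key2
      rw [key2]
      have hm : ∀ m, (∑ l ∈ (rb2 m).index,
          S ((ra1 i).left j * rb.left m) *
            ((ra1 i).right j * (rb2 m).left l * (S ((rb2 m).right l) * S (ra.right i))))
          = counit (R := k) (rb.right m) •
              (S ((ra1 i).left j * rb.left m) * ((ra1 i).right j * S (ra.right i))) := by
        intro m
        calc (∑ l ∈ (rb2 m).index,
            S ((ra1 i).left j * rb.left m) *
              ((ra1 i).right j * (rb2 m).left l * (S ((rb2 m).right l) * S (ra.right i))))
            = (S ((ra1 i).left j * rb.left m) * (ra1 i).right j) *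
                ((∑ l ∈ (rb2 m).index, (rb2 m).left l * S ((rb2 m).right l)) * S (ra.right i)) := by
              rw [Finset.sum_mul, Finset.mul_sum]
              exact Finset.sum_congr rfl fun l _ => by simp only [mul_assoc]
          _ = (S ((ra1 i).left j * rb.left m) * (ra1 i).right j) *
                ((counit (R := k) (rb.right m) • (1 : H)) * S (ra.right i)) := by
              rw [sum_mul_antipode_eq_smul]
          _ = counit (R := k) (rb.right m) •
                (S ((ra1 i).left j * rb.left m) * ((ra1 i).right j * S (ra.right i))) := by
              simp only [smul_mul_assoc, one_mul, mul_smul_comm, mul_assoc]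
      calc (∑ m ∈ rb.index, ∑ l ∈ (rb2 m).index,
            S ((ra1 i).left j * rb.left m) *
              ((ra1 i).right j * (rb2 m).left l * (S ((rb2 m).right l) * S (ra.right i))))
          = ∑ m ∈ rb.index, counit (R := k) (rb.right m) •
              (S ((ra1 i).left j * rb.left m) * ((ra1 i).right j * S (ra.right i))) :=
            Finset.sum_congr rfl fun m _ => hm m
        _ = S ((ra1 i).left j * b) * ((ra1 i).right j * S (ra.right i)) := by
            have h := congrArg (LinearMap.mulRight k ((ra1 i).right j * S (ra.right i)) ∘ₗ
              S ∘ₗ LinearMap.mulLeft k ((ra1 i).left j)) (repr_smul_left rb)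
            simpa only [map_sum, map_smul, LinearMap.comp_apply, LinearMap.mulLeft_apply,
              LinearMap.mulRight_apply] using h
    calc (∑ i ∈ ra.index, ∑ j ∈ (ra1 i).index, ∑ m ∈ rb.index, ∑ l ∈ (rb1 m).index,
          S ((ra1 i).left j * (rb1 m).left l) *
            ((ra1 i).right j * (rb1 m).right l * (S (rb.right m) * S (ra.right i))))
        = ∑ i ∈ ra.index, ∑ j ∈ (ra1 i).index,
            S ((ra1 i).left j * b) * ((ra1 i).right j * S (ra.right i)) :=
          Finset.sum_congr rfl fun i hi => Finset.sum_congr rfl fun j hj => h2a i hi j hj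
      _ = ∑ i ∈ ra.index, ∑ j ∈ (ra2 i).index,
            S (ra.left i * b) * ((ra2 i).left j * S ((ra2 i).right j)) := by
          have key := sum_tmul_tmul_eq (R := k) ra ra1 ra2
          have key2 := congrArg (triMul (S ∘ₗ LinearMap.mulRight k b) LinearMap.id S) key
          simpa only [map_sum, triMul_tmul, LinearMap.comp_apply, LinearMap.mulRight_apply,
            LinearMap.id_apply] using key2
      _ = ∑ i ∈ ra.index, counit (R := k) (ra.right i) • S (ra.left i * b) := by
          refine Finset.sum_congr rfl fun i _ => ?_
          rw [← Finset.mul_sum, sum_mul_antipode_eq_smul]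
          simp only [mul_smul_comm, mul_one]
      _ = S (a * b) := by
          have h := congrArg (S ∘ₗ LinearMap.mulRight k b) (repr_smul_left ra)
          simpa only [map_sum, map_smul, LinearMap.comp_apply, LinearMap.mulRight_apply] using h
  rw [← claim2, claim1]


end MPIAux

/-- A modular pair in involution `(δ, σ)` gives a stable anti-Yetter–Drinfeld module
structure on the one-dimensional space `k`: if `δ : H → k` is a character, `σ ∈ H` is
group-like with `δ(σ) = 1`, and the twisted antipode `S_δ(h) = δ(h₍₁₎)S(h₍₂₎)` satisfies
`S_δ² = Ad_σ`, then the coaction of `v·h = δ(h)v` equals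
`S(h₍₃₎)σh₍₁₎ ⊗ δ(h₍₂₎)v` (the AYD condition), and stability `δ(σ) = 1` holds.
The element `S(h₍₃₎) σ h₍₁₎ δ(h₍₂₎)` is encoded by the linear map `F` below. -/
theorem mpi_gives_SAYD_on_k
    (k : Type*) [Field k] (H : Type*) [Ring H] [HopfAlgebra k H]
    (δ : H →ₐ[k] k) (σ : H)
    (hσΔ : Coalgebra.comul (R := k) σ = σ ⊗ₜ σ)
    (hσε : Coalgebra.counit (R := k) σ = 1)
    (hδσ : δ σ = 1)
    -- the twisted antipode S_δ(h) = δ(h₍₁₎)S(h₍₂₎)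
    (Sδ : H →ₗ[k] H)
    (hSδ : Sδ = (TensorProduct.lid k H).toLinearMap
        ∘ₗ TensorProduct.map δ.toLinearMap (HopfAlgebra.antipode (R := k))
        ∘ₗ Coalgebra.comul)
    -- S_δ² = Ad_σ
    (hinv : ∀ h : H, Sδ (Sδ h) * σ = σ * h)
    -- the map h ↦ δ(h₍₂₎) S(h₍₃₎) σ h₍₁₎ computing the coaction side of the AYD condition
    (F : H →ₗ[k] H)
    (hF : F = LinearMap.mul' k H
        ∘ₗ TensorProduct.map (LinearMap.mulRight k σ ∘ₗ Sδ) LinearMap.id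
        ∘ₗ (TensorProduct.comm k H H).toLinearMap
        ∘ₗ Coalgebra.comul) :
    (∀ h : H, F h = δ h • σ) ∧ δ σ = 1 := by
  classical
  have hSδ' : ∀ (h : H) {ι : Type _} (r : Coalgebra.Repr k h ι),
      Sδ h = ∑ i ∈ r.index, δ (r.left i) • antipode (R := k) (r.right i) := by
    intro h _ r
    rw [hSδ]
    simp only [LinearMap.comp_apply, LinearEquiv.coe_coe]
    rw [show Coalgebra.comul (R := k) h = ∑ i ∈ r.index, r.left i ⊗ₜ[k] r.right i from r.eq.symm]
    simp [map_sum]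
  have Sδ_one : Sδ (1 : H) = 1 := by
    rw [hSδ]
    simp [Bialgebra.comul_one, Algebra.TensorProduct.one_def, MPIAux.antipode_one']
  have Sδ_mul : ∀ x y : H, Sδ (x * y) = Sδ y * Sδ x := by
    intro x y
    let rx := ℛ k x
    let ry := ℛ k y
    have ht : Coalgebra.comul (R := k) (x * y) = ∑ p ∈ rx.index ×ˢ ry.index,
        (rx.left p.1 * ry.left p.2) ⊗ₜ[k] (rx.right p.1 * ry.right p.2) := by
      rw [Bialgebra.comul_mul, ← rx.eq, ← ry.eq, Finset.sum_mul_sum, Finset.sum_product]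
      simp [Algebra.TensorProduct.tmul_mul_tmul]
    have e0 : Sδ (x * y) = ∑ p ∈ rx.index ×ˢ ry.index,
        δ (rx.left p.1 * ry.left p.2) • antipode (R := k) (rx.right p.1 * ry.right p.2) :=
      hSδ' (x * y) ⟨rx.index ×ˢ ry.index, fun p => rx.left p.1 * ry.left p.2,
        fun p => rx.right p.1 * ry.right p.2, ht.symm⟩
    rw [e0, hSδ' x rx, hSδ' y ry, Finset.sum_mul_sum, Finset.sum_product, Finset.sum_comm]
    refine Finset.sum_congr rfl fun m _ => Finset.sum_congr rfl fun i _ => ?_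
    simp [MPIAux.antipode_mul_rev, smul_smul, smul_mul_assoc, mul_smul_comm, mul_comm]
  have L1 : ∀ (h : H) (r : Coalgebra.Repr k h (H × H)),
      ∑ i ∈ r.index, Sδ (r.left i) * r.right i = δ h • 1 := by
    intro h r
    let r1 : ∀ i, Coalgebra.Repr k (r.left i) (H × H) := fun i => ℛ k (r.left i)
    let r2 : ∀ i, Coalgebra.Repr k (r.right i) (H × H) := fun i => ℛ k (r.right i)
    calc (∑ i ∈ r.index, Sδ (r.left i) * r.right i)
        = ∑ i ∈ r.index, ∑ j ∈ (r1 i).index,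
            δ ((r1 i).left j) • (antipode (R := k) ((r1 i).right j) * r.right i) := by
          refine Finset.sum_congr rfl fun i _ => ?_
          rw [hSδ' (r.left i) (r1 i), Finset.sum_mul]
          exact Finset.sum_congr rfl fun j _ => smul_mul_assoc _ _ _
      _ = ∑ i ∈ r.index, ∑ j ∈ (r2 i).index,
            δ (r.left i) • (antipode (R := k) ((r2 i).left j) * (r2 i).right j) := by
          have key := Coalgebra.sum_tmul_tmul_eq (R := k) r r1 r2
          have key2 := congrArg ((TensorProduct.lid k H).toLinearMap ∘ₗ
            TensorProduct.map δ.toLinearMap (LinearMap.mul' k H ∘ₗ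
              TensorProduct.map (antipode (R := k)) LinearMap.id)) key
          simpa only [map_sum, LinearMap.comp_apply, LinearEquiv.coe_coe,
            TensorProduct.map_tmul, TensorProduct.lid_tmul, LinearMap.mul'_apply,
            LinearMap.id_coe, id_eq, AlgHom.toLinearMap_apply] using key2
      _ = ∑ i ∈ r.index, δ (r.left i) •
            (Coalgebra.counit (R := k) (r.right i) • (1 : H)) := by
          refine Finset.sum_congr rfl fun i _ => ?_
          rw [← Finset.smul_sum, HopfAlgebra.sum_antipode_mul_eq_smul]
      _ = δ h • 1 := by
          have h1 := congrArg δ (MPIAux.repr_smul_left r)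
          simp only [map_sum, map_smul] at h1
          rw [← h1, Finset.sum_smul]
          refine Finset.sum_congr rfl fun i _ => ?_
          rw [smul_smul, smul_eq_mul, mul_comm]
  refine ⟨fun h => ?_, hδσ⟩
  let r := ℛ k h
  have hFh : F h = ∑ i ∈ r.index, Sδ (r.right i) * σ * r.left i := by
    rw [hF]
    simp only [LinearMap.comp_apply, LinearEquiv.coe_coe]
    rw [show Coalgebra.comul (R := k) h = ∑ i ∈ r.index, r.left i ⊗ₜ[k] r.right i from r.eq.symm]
    simp [map_sum]
  rw [hFh]
  calc (∑ i ∈ r.index, Sδ (r.right i) * σ * r.left i)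
      = ∑ i ∈ r.index, Sδ (Sδ (r.left i) * r.right i) * σ := by
        refine Finset.sum_congr rfl fun i _ => ?_
        calc Sδ (r.right i) * σ * r.left i
            = Sδ (r.right i) * (σ * r.left i) := mul_assoc _ _ _
          _ = Sδ (r.right i) * (Sδ (Sδ (r.left i)) * σ) := by rw [hinv]
          _ = Sδ (r.right i) * Sδ (Sδ (r.left i)) * σ := (mul_assoc _ _ _).symm
          _ = Sδ (Sδ (r.left i) * r.right i) * σ := by rw [Sδ_mul]
    _ = Sδ (δ h • (1 : H)) * σ := by
        rw [← Finset.sum_mul, ← map_sum, L1 h r]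
    _ = δ h • σ := by
        rw [map_smul, Sδ_one, smul_mul_assoc, one_mul]
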